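/- Let v : ℂ → ℂ be analytic on a neighborhood of a real point x₀ with v(x₀) = 0, and let S : ℝ × ℂ → ℂ be jointly analytic near ℝ × {x₀} (so that mixed partial derivatives commute), satisfying ∂ₜS(t, z) = −2i·v(z)·∂_zS(t, z) and S(0, z) = z. Then for all t ∈ ℝ: (i) S(t, x₀) = x₀ (x₀ is a stationary point lying on every curve Γₜ); and (ii) ∂_zS(t, x₀) = exp(−2i·v′(x₀)·t). In particular, the tangent line to Γₜ at the stationary point x₀ rotates at the constant rate dθ/dt = v′(x₀). -/

import Mathlib

/-- Stationary point with rotating tangent: if v(x₀) = 0 then x₀ is fixed by every S t,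
and the clinant satisfies ∂_zS(t, x₀) = exp(−2i·v′(x₀)·t), so the tangent line to Γₜ
rotates at constant rate v′(x₀). -/
theorem stmt8 (x₀ : ℝ) (v : ℂ → ℂ) (S : ℝ → ℂ → ℂ) (U : Set ℂ)
    (hU : IsOpen U) (hx₀ : (x₀ : ℂ) ∈ U)
    (hv : AnalyticAt ℂ v (x₀ : ℂ)) (hv0 : v (x₀ : ℂ) = 0)
    (hanal : ∀ t : ℝ, AnalyticAt ℂ (S t) (x₀ : ℂ))
    (hPDE : ∀ t : ℝ, ∀ z ∈ U,
      HasDerivAt (fun u => S u z) (-2 * Complex.I * v z * deriv (S t) z) t)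
    (hmix : ∀ t : ℝ, HasDerivAt (fun u => deriv (S u) (x₀ : ℂ))
      (deriv (fun z => -2 * Complex.I * v z * deriv (S t) z) (x₀ : ℂ)) t)
    (hid : ∀ z : ℂ, S 0 z = z) :
    ∀ t : ℝ, S t (x₀ : ℂ) = (x₀ : ℂ) ∧
      deriv (S t) (x₀ : ℂ) = Complex.exp (-2 * Complex.I * deriv v (x₀ : ℂ) * t) := by
  set c : ℂ := -2 * Complex.I * deriv v (x₀ : ℂ) with hc
  -- Part 1: x₀ is stationary
  have h1 : ∀ t : ℝ, S t (x₀ : ℂ) = (x₀ : ℂ) := by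
    have hd : Differentiable ℝ (fun u : ℝ => S u (x₀ : ℂ)) := by
      intro t
      have := hPDE t _ hx₀
      rw [hv0] at this
      simpa using this.differentiableAt
    have hz : ∀ t : ℝ, deriv (fun u : ℝ => S u (x₀ : ℂ)) t = 0 := by
      intro t
      have := hPDE t _ hx₀
      rw [hv0] at this
      simpa using this.deriv
    intro t
    have := is_const_of_deriv_eq_zero hd hz t 0
    simpa [hid] using this
  -- f t := deriv (S t) x₀
  set f : ℝ → ℂ := fun t => deriv (S t) (x₀ : ℂ) with hf
  have hf0 : f 0 = 1 := by
    have : S 0 = id := funext fun z => hid z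
    simp [hf, this]
  have hfd : ∀ t : ℝ, HasDerivAt f (c * f t) t := by
    intro t
    have hg : DifferentiableAt ℂ (deriv (S t)) (x₀ : ℂ) := by
      have h0 := ((hanal t).fderiv.differentiableAt).clm_apply (differentiableAt_const (1:ℂ))
      simpa only [fderiv_apply_one_eq_deriv] using h0
    have h1' : HasDerivAt (fun z => -2 * Complex.I * v z) (-2 * Complex.I * deriv v (x₀:ℂ))
        (x₀ : ℂ) := (hv.differentiableAt.hasDerivAt).const_mul (-2 * Complex.I)
    have h2' : HasDerivAt (deriv (S t)) (deriv (deriv (S t)) (x₀ : ℂ)) (x₀ : ℂ) :=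
      hg.hasDerivAt
    have hprod : HasDerivAt (fun z => -2 * Complex.I * v z * deriv (S t) z)
        (-2 * Complex.I * deriv v (x₀:ℂ) * deriv (S t) (x₀:ℂ)
          + -2 * Complex.I * v (x₀:ℂ) * deriv (deriv (S t)) (x₀:ℂ)) (x₀ : ℂ) :=
      h1'.mul h2'
    have hderiv : deriv (fun z => -2 * Complex.I * v z * deriv (S t) z) (x₀ : ℂ) = c * f t := by
      rw [hprod.deriv, hv0]
      simp [hc, hf, mul_comm]
    have := hmix t
    rw [hderiv] at this
    exact this
  -- g t := f t * exp (-(c * t)) has zero derivative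
  have hexp : ∀ t : ℝ, HasDerivAt (fun u : ℝ => Complex.exp (-(c * u)))
      (-c * Complex.exp (-(c * t))) t := by
    intro t
    have h0 : HasDerivAt (fun u : ℝ => -(c * (u : ℂ))) (-c) t := by
      simpa [Pi.neg_def] using ((Complex.ofRealCLM.hasDerivAt (x := t)).const_mul c).neg
    simpa [mul_comm] using h0.cexp
  have hg : ∀ t : ℝ, HasDerivAt (fun u : ℝ => f u * Complex.exp (-(c * u))) 0 t := by
    intro t
    have : HasDerivAt (fun u : ℝ => f u * Complex.exp (-(c * u))) _ t := (hfd t).mul (hexp t)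
    convert this using 1
    ring
  have hgconst : ∀ t : ℝ, f t * Complex.exp (-(c * t)) = 1 := by
    intro t
    have := is_const_of_deriv_eq_zero (fun u => (hg u).differentiableAt)
      (fun u => (hg u).deriv) t 0
    simpa [hf0] using this
  intro t
  refine ⟨h1 t, ?_⟩
  have := hgconst t
  have h2 : f t = Complex.exp (c * t) := by
    have h3 := congrArg (fun w => w * Complex.exp (c * t)) this
    simpa [mul_assoc, ← Complex.exp_add] using h3
  simpa [hc, hf] using h2
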